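/- Cosine Frullani integral with complex damping: for p ∈ ℂ with Re p > 0 and real numbers b, c, the function t ↦ (cos(b t) − cos(c t)) exp(−p t)/t is integrable on (0, ∞) and ∫_0^∞ (cos(b t) − cos(c t)) exp(−p t)/t dt = (1/2)(Log(p + i c) + Log(p − i c) − Log(p + i b) − Log(p − i b)), where Log denotes the principal branch of the complex logarithm. -/

import Mathlib

open MeasureTheory Set Complex Filter

/-- `∫_0^∞ e^{-st} dt = 1/s` together with integrability, for `Re s > 0`. -/
lemma cexp_neg_mul_integrableOn {s : ℂ} (hs : 0 < s.re) :
    IntegrableOn (fun t : ℝ => Complex.exp (-s * t)) (Ioi 0) := by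
  apply (exp_neg_integrableOn_Ioi 0 hs).mono'
    ((Complex.continuous_exp.comp (by continuity)).aestronglyMeasurable)
  filter_upwards with t
  simp [Complex.norm_exp, neg_mul]

lemma cexp_neg_mul_integral {s : ℂ} (hs : 0 < s.re) :
    ∫ t : ℝ in Ioi 0, Complex.exp (-s * t) = 1 / s := by
  have hs0 : s ≠ 0 := fun h => by simp [h] at hs
  have hderiv : ∀ x ∈ Ici (0:ℝ),
      HasDerivAt (fun t : ℝ => -Complex.exp (-s * t) / s) (Complex.exp (-s * x)) x := by
    intro x _
    have h1 : HasDerivAt (fun z : ℂ => -Complex.exp (-s * z) / s)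
        (Complex.exp (-s * x)) (x : ℂ) := by
      have h2 : HasDerivAt (fun z : ℂ => -s * z) (-s) (x : ℂ) := by
        simpa using (hasDerivAt_id (x:ℂ)).const_mul (-s)
      have h3 := ((Complex.hasDerivAt_exp (-s * (x:ℂ))).comp (x:ℂ) h2).neg.div_const s
      convert h3 using 1
      · rfl
      · rfl
      · rfl
      rw [mul_neg, neg_neg, mul_div_assoc, div_self hs0, mul_one]
    exact h1.comp_ofReal
  have htend : Tendsto (fun t : ℝ => -Complex.exp (-s * t) / s) atTop (nhds 0) := by
    rw [tendsto_zero_iff_norm_tendsto_zero]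
    have : Tendsto (fun t : ℝ => Real.exp (-(s.re * t)) / ‖s‖) atTop (nhds (0 / ‖s‖)) :=
      (Real.tendsto_exp_neg_atTop_nhds_zero.comp
        (tendsto_id.const_mul_atTop hs)).div_const _
    simpa [Complex.norm_exp, neg_mul, Function.comp] using this
  have := integral_Ioi_of_hasDerivAt_of_tendsto' hderiv (cexp_neg_mul_integrableOn hs) htend
  rw [this]
  simp
  ring

/-- Frullani-type integral for complex exponentials. -/
lemma frullani_cexp (a a' : ℂ) (ha : 0 < a.re) (ha' : 0 < a'.re) :
    IntegrableOn (fun t : ℝ => (Complex.exp (-a * t) - Complex.exp (-a' * t)) / t) (Ioi 0) ∧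
      ∫ t : ℝ in Ioi 0, (Complex.exp (-a * t) - Complex.exp (-a' * t)) / t
        = Complex.log a' - Complex.log a := by
  set d : ℂ := a' - a with hd
  set m : ℝ := min a.re a'.re with hm
  have hm0 : 0 < m := lt_min ha ha'
  -- positivity of real parts along the segment
  have hre : ∀ u : ℝ, u ∈ Icc (0:ℝ) 1 → m ≤ (a + u * d).re := by
    intro u hu
    have : (a + (u:ℂ) * d).re = (1 - u) * a.re + u * a'.re := by
      simp [hd, Complex.add_re, Complex.mul_re, Complex.sub_re]
      ring
    rw [this]
    calc m = (1 - u) * m + u * m := by ring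
    _ ≤ (1 - u) * a.re + u * a'.re := by
        gcongr
        · linarith [hu.2]
        · exact min_le_left _ _
        · exact hu.1
        · exact min_le_right _ _
  -- the double-integral kernel
  set F : ℝ × ℝ → ℂ := fun z => d * Complex.exp (-(a + z.2 * d) * z.1) with hF
  set μ : Measure ℝ := volume.restrict (Ioi 0)
  set ν : Measure ℝ := volume.restrict (Ioc (0:ℝ) 1)
  -- integrability of F on the product
  have hFint : Integrable F (μ.prod ν) := by
    have hmeas : AEStronglyMeasurable F (μ.prod ν) := by
      apply Continuous.aestronglyMeasurable
      exact continuous_const.mul (Complex.continuous_exp.comp (by continuity))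
    have hbound : Integrable (fun z : ℝ × ℝ => ‖d‖ * Real.exp (-m * z.1) * 1) (μ.prod ν) :=
      ((exp_neg_integrableOn_Ioi 0 hm0).const_mul ‖d‖).mul_prod
        ((integrableOn_const_iff).mpr (Or.inr (by simp)))
    apply hbound.mono' hmeas
    have : ∀ᵐ z ∂(μ.prod ν), z ∈ Ioi (0:ℝ) ×ˢ Ioc (0:ℝ) 1 := by
      rw [show μ.prod ν = (volume.prod volume).restrict ((Ioi (0:ℝ)) ×ˢ (Ioc (0:ℝ) 1)) from
        Measure.prod_restrict _ _]
      exact ae_restrict_mem (measurableSet_Ioi.prod measurableSet_Ioc)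
    filter_upwards [this] with z hz
    have h1 : (0:ℝ) < z.1 := hz.1
    have h2 := hre z.2 (Ioc_subset_Icc_self hz.2)
    simp only [hF, norm_mul, Complex.norm_exp, mul_one]
    apply mul_le_mul_of_nonneg_left _ (norm_nonneg d)
    rw [Real.exp_le_exp]
    have hre' : (-(a + (z.2:ℂ) * d) * (z.1:ℂ)).re = -((a + (z.2:ℂ) * d).re * z.1) := by
      simp [Complex.mul_re]; ring
    rw [hre', neg_mul, neg_le_neg_iff]
    exact mul_le_mul_of_nonneg_right h2 h1.le
  -- pointwise segment representation
  have hseg : ∀ t : ℝ, 0 < t → ∫ u in (0:ℝ)..1, F (t, u)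
      = (Complex.exp (-a * t) - Complex.exp (-a' * t)) / t := by
    intro t ht
    have ht' : (t:ℂ) ≠ 0 := Complex.ofReal_ne_zero.mpr ht.ne'
    have hderiv : ∀ u ∈ uIcc (0:ℝ) 1,
        HasDerivAt (fun u : ℝ => -(Complex.exp (-(a + u * d) * t)) / t) (F (t, u)) u := by
      intro u _
      have h1 : HasDerivAt (fun z : ℂ => -(a + z * d) * t) (-(d * t)) (u:ℂ) := by
        simpa using (((hasDerivAt_id (u:ℂ)).mul_const d).const_add a).neg.mul_const (t:ℂ)
      have h2 := ((Complex.hasDerivAt_exp (-(a + (u:ℂ) * d) * t)).comp (u:ℂ) h1).neg.div_const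
        (t:ℂ)
      have h3 : HasDerivAt (fun z : ℂ => -(Complex.exp (-(a + z * d) * t)) / t)
          (d * Complex.exp (-(a + u * d) * t)) (u:ℂ) := by
        convert h2 using 1
        · rfl
        · rfl
        · rfl
        rw [mul_neg, neg_neg, mul_div_assoc, mul_div_cancel_right₀ _ ht']
        ring
      exact h3.comp_ofReal
    have hint : IntervalIntegrable (fun u : ℝ => F (t, u)) volume 0 1 :=
      (Continuous.continuousOn
        (continuous_const.mul (Complex.continuous_exp.comp (by continuity)))).intervalIntegrable
    rw [intervalIntegral.integral_eq_sub_of_hasDerivAt hderiv hint]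
    have ha'd : a + (1:ℝ) * d = a' := by push_cast; rw [hd]; ring
    have had : a + (0:ℝ) * d = a := by push_cast; ring
    rw [ha'd, had]
    ring
  -- inner integral over t
  have hinner : ∀ u : ℝ, u ∈ Icc (0:ℝ) 1 →
      ∫ t : ℝ in Ioi 0, F (t, u) = d / (a + u * d) := by
    intro u hu
    have hre2 : 0 < (a + (u:ℂ) * d).re := lt_of_lt_of_le hm0 (hre u hu)
    simp only [hF]
    rw [integral_const_mul, cexp_neg_mul_integral hre2]
    ring
  -- log integral
  have hlog : ∫ u in (0:ℝ)..1, d / (a + u * d) = Complex.log a' - Complex.log a := by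
    have hderiv : ∀ u ∈ uIcc (0:ℝ) 1,
        HasDerivAt (fun u : ℝ => Complex.log (a + u * d)) (d / (a + u * d)) u := by
      intro u hu
      have hu' : u ∈ Icc (0:ℝ) 1 := by rwa [uIcc_of_le zero_le_one] at hu
      have hre2 : 0 < (a + (u:ℂ) * d).re := lt_of_lt_of_le hm0 (hre u hu')
      have hmem : (a + (u:ℂ) * d) ∈ Complex.slitPlane := Or.inl hre2
      have h1 : HasDerivAt (fun z : ℂ => a + z * d) d (u:ℂ) := by
        simpa using ((hasDerivAt_id (u:ℂ)).mul_const d).const_add a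
      have h2 := ((Complex.hasDerivAt_log hmem).comp (u:ℂ) h1).comp_ofReal
      convert h2 using 1
      · rfl
      rw [div_eq_inv_mul]
    have hne : ∀ u ∈ uIcc (0:ℝ) 1, a + (u:ℂ) * d ≠ 0 := by
      intro u hu
      have hu' : u ∈ Icc (0:ℝ) 1 := by rwa [uIcc_of_le zero_le_one] at hu
      have hre2 : 0 < (a + (u:ℂ) * d).re := lt_of_lt_of_le hm0 (hre u hu')
      intro h
      rw [h] at hre2
      simp at hre2
    have hint : IntervalIntegrable (fun u : ℝ => d / (a + u * d)) volume 0 1 := by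
      apply ContinuousOn.intervalIntegrable
      apply ContinuousOn.div continuousOn_const
      · exact Continuous.continuousOn
          (continuous_const.add (Complex.continuous_ofReal.mul continuous_const))
      · exact hne
    rw [intervalIntegral.integral_eq_sub_of_hasDerivAt hderiv hint]
    have ha'd : a + ((1:ℝ):ℂ) * d = a' := by push_cast; rw [hd]; ring
    have had : a + ((0:ℝ):ℂ) * d = a := by push_cast; ring
    rw [ha'd, had]
  -- marginal equals our function a.e.
  have hmarg : (fun t : ℝ => ∫ u, F (t, u) ∂ν)
      =ᵐ[μ] fun t : ℝ => (Complex.exp (-a * t) - Complex.exp (-a' * t)) / t := by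
    have : ∀ᵐ t ∂μ, t ∈ Ioi (0:ℝ) := ae_restrict_mem measurableSet_Ioi
    filter_upwards [this] with t ht
    rw [← hseg t ht, intervalIntegral.integral_of_le zero_le_one]
  constructor
  · exact (hFint.integral_prod_left.congr hmarg)
  · calc ∫ t : ℝ in Ioi 0, (Complex.exp (-a * t) - Complex.exp (-a' * t)) / t
        = ∫ t, (∫ u, F (t, u) ∂ν) ∂μ := (integral_congr_ae hmarg).symm
      _ = ∫ u, (∫ t, F (t, u) ∂μ) ∂ν := integral_integral_swap hFint
      _ = ∫ u in Ioc (0:ℝ) 1, d / (a + u * d) := by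
          apply setIntegral_congr_fun measurableSet_Ioc
          intro u hu
          exact hinner u (Ioc_subset_Icc_self hu)
      _ = ∫ u in (0:ℝ)..1, d / (a + u * d) := by
          rw [intervalIntegral.integral_of_le zero_le_one]
      _ = Complex.log a' - Complex.log a := hlog

theorem frullani_cos_integral (p : ℂ) (hp : 0 < p.re) (b c : ℝ) :
    MeasureTheory.IntegrableOn
      (fun t : ℝ =>
        (Complex.cos (b * t) - Complex.cos (c * t)) * Complex.exp (-p * t) / t)
      (Set.Ioi 0) ∧
    ∫ t : ℝ in Set.Ioi 0,
        (Complex.cos (b * t) - Complex.cos (c * t)) * Complex.exp (-p * t) / t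
      = (1 / 2) * (Complex.log (p + Complex.I * c) + Complex.log (p - Complex.I * c)
          - Complex.log (p + Complex.I * b) - Complex.log (p - Complex.I * b)) := by
  have hmb : 0 < (p - Complex.I * b).re := by simpa [Complex.sub_re, Complex.mul_re] using hp
  have hmc : 0 < (p - Complex.I * c).re := by simpa [Complex.sub_re, Complex.mul_re] using hp
  have hpb : 0 < (p + Complex.I * b).re := by simpa [Complex.add_re, Complex.mul_re] using hp
  have hpc : 0 < (p + Complex.I * c).re := by simpa [Complex.add_re, Complex.mul_re] using hp
  obtain ⟨i1, e1⟩ := frullani_cexp (p - Complex.I * b) (p - Complex.I * c) hmb hmc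
  obtain ⟨i2, e2⟩ := frullani_cexp (p + Complex.I * b) (p + Complex.I * c) hpb hpc
  have key : ∀ t : ℝ,
      (Complex.cos (b * t) - Complex.cos (c * t)) * Complex.exp (-p * t) / t
        = (1/2) * ((Complex.exp (-(p - Complex.I * b) * t)
              - Complex.exp (-(p - Complex.I * c) * t)) / t)
          + (1/2) * ((Complex.exp (-(p + Complex.I * b) * t)
              - Complex.exp (-(p + Complex.I * c) * t)) / t) := by
    intro t
    have hcomb : ∀ X Y : ℂ,
        (1/2) * (X / t) + (1/2) * (Y / t) = ((1/2) * X + (1/2) * Y) / t := by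
      intro X Y; ring
    rw [hcomb]
    congr 1
    rw [Complex.cos, Complex.cos,
      show (-(p - Complex.I * b) * (t:ℂ)) = ((b*t : ℝ):ℂ) * Complex.I + -p * t from by
        push_cast; ring,
      show (-(p - Complex.I * c) * (t:ℂ)) = ((c*t : ℝ):ℂ) * Complex.I + -p * t from by
        push_cast; ring,
      show (-(p + Complex.I * b) * (t:ℂ)) = -(((b*t : ℝ):ℂ) * Complex.I) + -p * t from by
        push_cast; ring,
      show (-(p + Complex.I * c) * (t:ℂ)) = -(((c*t : ℝ):ℂ) * Complex.I) + -p * t from by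
        push_cast; ring,
      Complex.exp_add, Complex.exp_add, Complex.exp_add, Complex.exp_add]
    push_cast
    ring_nf
  have hfun : (fun t : ℝ =>
      (Complex.cos (b * t) - Complex.cos (c * t)) * Complex.exp (-p * t) / t)
      = fun t : ℝ =>
        (1/2) * ((Complex.exp (-(p - Complex.I * b) * t)
              - Complex.exp (-(p - Complex.I * c) * t)) / t)
          + (1/2) * ((Complex.exp (-(p + Complex.I * b) * t)
              - Complex.exp (-(p + Complex.I * c) * t)) / t) := funext key
  constructor
  · rw [hfun]
    exact (i1.const_mul _).add (i2.const_mul _)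
  · rw [show (∫ t : ℝ in Set.Ioi 0,
        (Complex.cos (b * t) - Complex.cos (c * t)) * Complex.exp (-p * t) / t)
        = ∫ t : ℝ in Set.Ioi 0,
          ((1/2) * ((Complex.exp (-(p - Complex.I * b) * t)
              - Complex.exp (-(p - Complex.I * c) * t)) / t)
          + (1/2) * ((Complex.exp (-(p + Complex.I * b) * t)
              - Complex.exp (-(p + Complex.I * c) * t)) / t)) from by rw [hfun]]
    rw [integral_add (i1.const_mul _) (i2.const_mul _), integral_const_mul, integral_const_mul,
      e1, e2]
    ring
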